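/- arXiv:0909.1305 — 3 statements merged into one kernel-verified Lean document; each statement's English description precedes it below -/
import Mathlib

section
/- If ω is a real harmonic 1-form on the graph Γ of a compact discrete Riemann surface, then ω + i*ω is a discrete holomorphic 1-form (closed and of type (1,0)). -/
open Complex BigOperators Finset

/-- The double `Λ = Γ ⊕ Γ*` of a cellular decomposition `Γ` of a surface and its dual `Γ*`,
equipped with a discrete conformal structure `ρ : Λ₁ → ℝ₊` satisfying `ρ(e*) = 1/ρ(e)`.
Edges are oriented (each unoriented edge appears with both orientations); `rev` reverses
orientation, `dual` sends an edge to its dual edge (rotated by `+π/2`), so `(e*)* = -e`,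
i.e. `dual (dual e) = rev e`. -/
structure DCS where
  V : Type
  E : Type
  tail : E → V
  head : E → V
  rev : E → E
  dual : E → E
  inGamma : E → Bool
  rho : E → ℝ
  rev_rev : ∀ e, rev (rev e) = e
  tail_rev : ∀ e, tail (rev e) = head e
  dual_dual : ∀ e, dual (dual e) = rev e
  dual_rev : ∀ e, dual (rev e) = rev (dual e)
  inGamma_dual : ∀ e, inGamma (dual e) = !inGamma e
  inGamma_rev : ∀ e, inGamma (rev e) = inGamma e
  rho_pos : ∀ e, 0 < rho e
  rho_rev : ∀ e, rho (rev e) = rho e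
  rho_dual : ∀ e, rho (dual e) = (rho e)⁻¹

/-- A discrete 1-form on `Λ`: it changes sign under orientation reversal of an edge. -/
def IsOneForm (S : DCS) (α : S.E → ℂ) : Prop := ∀ e, α (S.rev e) = -α e

/-- The discrete Hodge star, defined by `∫_{e*} *α := ρ(e) ∫_e α`; for 1-forms this is
equivalently `∫_e *α = -ρ(e*) ∫_{e*} α`, which we take as the pointwise formula. -/
noncomputable def hstar (S : DCS) (α : S.E → ℂ) : S.E → ℂ :=
  fun e => -(S.rho (S.dual e) : ℂ) * α (S.dual e)

/-- if `ω` is a real harmonic 1-form on the graph `Γ` of a compact discrete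
Riemann surface (closed: `dω = 0` on every face of `Γ`, and coclosed: `d*ω = 0`, i.e.
`Σ_{e ∋ x} ρ(e) ∫_e ω = 0` at every vertex), then `ω + i*ω` is a discrete holomorphic
1-form: it is closed on `Λ` and of type `(1,0)` (`*α = −iα`).

Faces of `Λ` are in bijection with the vertices `Λ₀`: the boundary of the face around a
vertex `v` consists of the dual edges `dual e` of the edges `e` emanating from `v`, so
closedness of a 1-form `α` reads `Σ_{tail e = v} ∫_{dual e} α = 0` for all `v`. -/
theorem harmonic_gives_holomorphic (S : DCS) [Fintype S.E] [DecidableEq S.V]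
    (ω : S.E → ℂ)
    (hreal : ∀ e, (ω e).im = 0)
    (h1 : IsOneForm S ω)
    (hsupp : ∀ e, S.inGamma e = false → ω e = 0)
    (hclosed : ∀ v : S.V,
      ∑ e ∈ Finset.univ.filter (fun e => S.tail e = v), ω (S.dual e) = 0)
    (hcoclosed : ∀ v : S.V,
      ∑ e ∈ Finset.univ.filter (fun e => S.tail e = v), (S.rho e : ℂ) * ω e = 0) :
    (∀ v : S.V,
      ∑ e ∈ Finset.univ.filter (fun e => S.tail e = v),
        (ω (S.dual e) + Complex.I * hstar S ω (S.dual e)) = 0) ∧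
    (∀ e, hstar S (fun e' => ω e' + Complex.I * hstar S ω e') e
        = -Complex.I * (ω e + Complex.I * hstar S ω e)) := by
  have key : ∀ e, hstar S ω (S.dual e) = (S.rho e : ℂ) * ω e := by
    intro e
    simp only [hstar, S.dual_dual, S.rho_rev, h1 e]
    ring
  constructor
  · intro v
    simp only [key, Finset.sum_add_distrib, ← Finset.mul_sum, hclosed v, hcoclosed v,
      mul_zero, add_zero]
  · intro e
    have hne : (S.rho e : ℂ) ≠ 0 := by
      exact_mod_cast (S.rho_pos e).ne'
    simp only [hstar, key, S.rho_dual]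
    rw [S.dual_dual, h1 e]
    field_simp
    ring_nf
    simp [Complex.I_sq]
    left; field_simp
end

section
/- The discrete exterior derivative is a derivation for the wedge product: for functions f and 1-forms α on the double graph, d(fα) = df ∧ α + f dα as 2-forms on quad-graph faces, where f is averaged appropriately on the diagonals. -/
open Complex

/-- the discrete exterior derivative is a derivation for the wedge product:
for a function `f` on the vertices of the quad-graph and a 1-form `α`,
`d(fα) = df ∧ α + f dα` on every face `(x,y,x',y')`, where:
* `fα` is the 1-form with `∫_{(u,w)} fα = ((f(u)+f(w))/2) ∫_{(u,w)} α`,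
* `d` of a 1-form on a face is the sum of the form over the four boundary edges
  `x→y→x'→y'→x`,
* the wedge product is
  `∬ α∧β = ½(∫_{(x,x')}α ∫_{(y,y')}β − ∫_{(y,y')}α ∫_{(x,x')}β)`, the integral of a
  1-form along a diagonal being the average of its integrals along the two boundary paths
  joining the diagonal's endpoints,
* `f dα` multiplies `dα` by the average of `f` over the four vertices of the face. -/
theorem d_is_derivation_for_wedge {V : Type*} (f : V → ℂ) (α : V → V → ℂ)
    (hα : ∀ u w, α u w = -α w u) (x y x' y' : V) :
    -- d(fα) : sum of fα over the boundary x→y→x'→y'→x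
    ((f x + f y) / 2 * α x y + (f y + f x') / 2 * α y x'
        + (f x' + f y') / 2 * α x' y' + (f y' + f x) / 2 * α y' x)
      -- df ∧ α
      = (1/2) * ((f x' - f x) * ((α y x' + α x' y' - α y' x - α x y) / 2)
            - (f y' - f y) * ((α x y + α y x' - α x' y' - α y' x) / 2))
        -- + f dα
        + ((f x + f y + f x' + f y') / 4) * (α x y + α y x' + α x' y' + α y' x) := by
  ring
end

section
/- The genus 2 hyperelliptic curve y² = x⁶ − 1 has period matrix Ω = (i/√3)·[[2, −1], [−1, 2]] with respect to a suitable canonical homology basis. -/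
open Complex intervalIntegral

/-- A closed `C¹` loop on the affine part of the genus 2 curve `y² = x⁶ − 1`, avoiding the
branch points (where `y = 0`). -/
structure CurveLoop where
  γ : ℝ → ℂ × ℂ
  smooth : ContDiff ℝ 1 γ
  on_curve : ∀ t, (γ t).2 ^ 2 = (γ t).1 ^ 6 - 1
  y_ne_zero : ∀ t, (γ t).2 ≠ 0
  closed : γ 0 = γ 1

/-- The period `∫_γ x^j dx / y` of the holomorphic differential `ω_j = x^j dx / y`
(`j = 0, 1` give a basis of holomorphic 1-forms of the curve) along a loop. -/
noncomputable def period (j : ℕ) (c : CurveLoop) : ℂ :=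
  ∫ t in (0:ℝ)..1, (c.γ t).1 ^ j / (c.γ t).2 * deriv (fun s => (c.γ s).1) t


noncomputable section
namespace LawAux

def sr3 : ℝ := Real.sqrt 3
lemma sr3_sq : sr3 ^ 2 = 3 := Real.sq_sqrt (by norm_num)
lemma sr3_lb : 1.73 < sr3 := by
  have h : (1.73:ℝ) = Real.sqrt (1.73^2) := (Real.sqrt_sq (by norm_num)).symm
  rw [h]; exact Real.sqrt_lt_sqrt (by positivity) (by norm_num)
lemma sr3_ub : sr3 < 1.74 := by
  have h : (1.74:ℝ) = Real.sqrt (1.74^2) := (Real.sqrt_sq (by norm_num)).symm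
  rw [h]; exact Real.sqrt_lt_sqrt (by positivity) (by norm_num)
lemma sr3c_sq : ((sr3:ℝ):ℂ)^2 = 3 := by
  norm_cast
  exact_mod_cast sr3_sq

lemma abs_sin_lt_cos {a : ℝ} (ha : |a| < Real.pi/4) : |Real.sin a| < Real.cos a := by
  have hpi : (0:ℝ) < Real.pi := Real.pi_pos
  have h1 : |Real.sin a| = Real.sin |a| := by
    rcases abs_cases a with ⟨h, h0⟩ | ⟨h, h0⟩
    · rw [h]
      exact abs_of_nonneg (Real.sin_nonneg_of_nonneg_of_le_pi h0 (by nlinarith [abs_nonneg a]))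
    · rw [h, Real.sin_neg]
      have h2 : 0 ≤ Real.sin (-a) := by
        apply Real.sin_nonneg_of_nonneg_of_le_pi (by linarith)
        nlinarith [abs_nonneg a]
      rw [Real.sin_neg] at h2
      exact abs_of_nonpos (by linarith)
  rw [h1, ← Real.cos_abs]
  have h2 : 0 ≤ |a| := abs_nonneg a
  have h3 : Real.cos |a| = Real.sin (Real.pi/2 - |a|) := (Real.sin_pi_div_two_sub _).symm
  rw [h3]
  apply Real.strictMonoOn_sin ⟨by linarith, by linarith⟩ ⟨by linarith, by linarith⟩
  linarith

/-- principal square root of a complex number with positive real part lies in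
the sector `|im| < re`. -/
lemma sqrt_sector {z : ℂ} (hz : 0 < z.re) :
    |(z ^ ((1:ℂ)/2)).im| < (z ^ ((1:ℂ)/2)).re := by
  have hz0 : z ≠ 0 := fun h => by simp [h] at hz
  rw [Complex.cpow_def_of_ne_zero hz0]
  rw [Complex.exp_re, Complex.exp_im]
  have him : (Complex.log z * (1/2)).im = Complex.arg z / 2 := by
    have h := Complex.log_im z
    rw [Complex.mul_im, h]
    norm_num
    ring
  rw [him]
  have harg : |Complex.arg z| < Real.pi/2 := Complex.abs_arg_lt_pi_div_two_iff.mpr (Or.inl hz)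
  have hlt : |Real.sin (Complex.arg z / 2)| < Real.cos (Complex.arg z / 2) := by
    apply abs_sin_lt_cos
    rw [abs_div, _root_.abs_two]
    linarith
  have hexp : 0 < Real.exp ((Complex.log z * (1/2)).re) := Real.exp_pos _
  rw [abs_mul, abs_of_pos hexp]
  exact (mul_lt_mul_iff_right₀ hexp).mpr hlt

lemma sector_re_pos {z : ℂ} (h : |z.im| < z.re) : 0 < z.re := lt_of_le_of_lt (abs_nonneg _) h

lemma sector_inv {z : ℂ} (h : |z.im| < z.re) : |(z⁻¹).im| < (z⁻¹).re := by
  have hre : 0 < z.re := sector_re_pos h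
  have hz : z ≠ 0 := by
    intro h0
    rw [h0] at hre
    simp at hre
  have hN : 0 < Complex.normSq z := Complex.normSq_pos.mpr hz
  rw [Complex.inv_re, Complex.inv_im, abs_div, abs_neg, abs_of_pos hN]
  exact div_lt_div_of_pos_right h hN

lemma mul_re_pos {a b : ℂ} (ha : |a.im| < a.re) (hb : |b.im| < b.re) : 0 < (a*b).re := by
  rw [Complex.mul_re]
  have h1 : a.im * b.im ≤ |a.im| * |b.im| := by
    calc a.im * b.im ≤ |a.im * b.im| := le_abs_self _
    _ = |a.im| * |b.im| := abs_mul _ _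
  nlinarith [abs_nonneg a.im, abs_nonneg b.im]

/-! ### The basic loop -/

def v (t : ℝ) : ℂ := (7/6) * Complex.exp (2*Real.pi*I*t)
def vi (t : ℝ) : ℂ := (6/7) * Complex.exp (-(2*Real.pi*I*t))

lemma v_mul_vi (t : ℝ) : v t * vi t = 1 := by
  unfold v vi
  rw [show (7/6 : ℂ) * Complex.exp (2*Real.pi*I*t) * ((6/7) * Complex.exp (-(2*Real.pi*I*t)))
      = Complex.exp (2*Real.pi*I*t + -(2*Real.pi*I*t)) * (7/6*(6/7)) by rw [Complex.exp_add]; ring]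
  norm_num

lemma v_eq (t : ℝ) : v t = 7/6 * (Real.cos (2*Real.pi*t) + Real.sin (2*Real.pi*t) * I) := by
  unfold v
  rw [show (2*(Real.pi:ℂ)*I*t) = ((2*Real.pi*t:ℝ):ℂ)*I by push_cast; ring,
    Complex.exp_mul_I, ← Complex.ofReal_cos, ← Complex.ofReal_sin]

lemma vi_eq (t : ℝ) : vi t = 6/7 * (Real.cos (2*Real.pi*t) - Real.sin (2*Real.pi*t) * I) := by
  unfold vi
  rw [show -(2*(Real.pi:ℂ)*I*t) = ((-(2*Real.pi*t):ℝ):ℂ)*I by push_cast; ring,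
    Complex.exp_mul_I, ← Complex.ofReal_cos, ← Complex.ofReal_sin,
    Real.cos_neg, Real.sin_neg]
  push_cast
  ring

lemma hv (t : ℝ) : HasDerivAt v (2*Real.pi*I * v t) t := by
  unfold v
  have h1 : HasDerivAt (fun s : ℝ => 2*(Real.pi:ℂ)*I*s) (2*Real.pi*I) t := by
    simpa using (Complex.ofRealCLM.hasDerivAt (x := t)).const_mul (2*(Real.pi:ℂ)*I)
  simpa [mul_comm, mul_assoc, mul_left_comm] using (h1.cexp).const_mul (7/6 : ℂ)

lemma hvi (t : ℝ) : HasDerivAt vi (-(2*Real.pi*I) * vi t) t := by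
  unfold vi
  have h1 : HasDerivAt (fun s : ℝ => -(2*(Real.pi:ℂ)*I*s)) (-(2*Real.pi*I)) t := by
    exact (((Complex.ofRealCLM.hasDerivAt (x := t)).const_mul (2*(Real.pi:ℂ)*I)).neg).congr_deriv (by simp)
  simpa [mul_comm, mul_assoc, mul_left_comm] using (h1.cexp).const_mul (6/7 : ℂ)

lemma v_contDiff : ContDiff ℝ 1 v :=
  contDiff_const.mul ((Complex.contDiff_exp.restrict_scalars (𝕜' := ℂ) ℝ).comp
    (contDiff_const.mul Complex.ofRealCLM.contDiff))
lemma vi_contDiff : ContDiff ℝ 1 vi :=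
  contDiff_const.mul ((Complex.contDiff_exp.restrict_scalars (𝕜' := ℂ) ℝ).comp
    ((contDiff_const.mul Complex.ofRealCLM.contDiff).neg))

lemma v_period : v 1 = v 0 := by
  unfold v
  push_cast
  rw [mul_one, mul_zero, Complex.exp_zero]
  rw [show (2*(Real.pi:ℂ)*I) = 2*Real.pi*I by ring, Complex.exp_two_pi_mul_I]
lemma vi_period : vi 1 = vi 0 := by
  unfold vi
  push_cast
  rw [mul_one, mul_zero, neg_zero, Complex.exp_zero]
  rw [show -(2*(Real.pi:ℂ)*I) = -(2*Real.pi*I) by ring, Complex.exp_neg,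
    Complex.exp_two_pi_mul_I, inv_one]

def J (t : ℝ) : ℂ := (v t + vi t)/2
def K (t : ℝ) : ℂ := (v t - vi t)/2
def w (t : ℝ) : ℂ := (sr3:ℂ)/2 + I/2 * J t
def c6 : ℂ := ((sr3:ℂ) + I)/2
def xx (t : ℝ) : ℂ := c6 * w t
def cq (t : ℝ) : ℂ := ((w t)^2 + (sr3:ℂ) * w t + 1) * ((w t)^2 + 1)
def sq (t : ℝ) : ℂ := (cq t) ^ ((1:ℂ)/2)
def yy (t : ℝ) : ℂ := (K t/2) * sq t

def pp (t : ℝ) : ℝ := sr3/2 - (13/168) * Real.sin (2*Real.pi*t)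
def uu (t : ℝ) : ℝ := (85/168) * Real.cos (2*Real.pi*t)

lemma w_eq (t : ℝ) : w t = (pp t : ℝ) + (uu t : ℝ)*I := by
  unfold w J pp uu
  rw [v_eq, vi_eq]
  push_cast [-Complex.ofReal_sin, -Complex.ofReal_cos]
  linear_combination (13/168 * ((Real.sin (2*Real.pi*t):ℝ):ℂ)) * Complex.I_sq

lemma K_eq (t : ℝ) : K t = ((13/84) * Real.cos (2*Real.pi*t) : ℝ)
    + ((85/84) * Real.sin (2*Real.pi*t) : ℝ)*I := by
  unfold K
  rw [v_eq, vi_eq]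
  push_cast [-Complex.ofReal_sin, -Complex.ofReal_cos]
  ring

lemma w_re (t : ℝ) : (w t).re = pp t := by rw [w_eq]; simp
lemma w_im (t : ℝ) : (w t).im = uu t := by rw [w_eq]; simp

lemma pp_bounds (t : ℝ) : 0.78 < pp t ∧ pp t < 0.95 := by
  unfold pp
  have h1 := Real.neg_one_le_sin (2*Real.pi*t)
  have h2 := Real.sin_le_one (2*Real.pi*t)
  constructor <;> nlinarith [sr3_lb, sr3_ub]

lemma uu_abs (t : ℝ) : |uu t| ≤ 85/168 := by
  unfold uu
  rw [abs_mul]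
  have h := Real.abs_cos_le_one (2*Real.pi*t)
  rw [abs_of_pos (by norm_num : (0:ℝ) < 85/168)]
  nlinarith

lemma w_sector (t : ℝ) : |(w t).im| < (w t).re := by
  rw [w_re, w_im]
  have h1 := (pp_bounds t).1
  have h2 := uu_abs t
  have h3 : (85:ℝ)/168 < 0.78 := by norm_num
  linarith

lemma cq_re_pos (t : ℝ) : 0 < (cq t).re := by
  have hre := w_re t
  have him := w_im t
  have h1 := (pp_bounds t).1
  have h2 := (pp_bounds t).2
  have h3 := uu_abs t
  have h4 : uu t ^ 2 ≤ (85/168)^2 := by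
    nlinarith [_root_.sq_abs (uu t), abs_nonneg (uu t)]
  have hb := sr3_lb
  have hc := sr3_ub
  unfold cq
  set p := pp t
  set u := uu t
  simp only [Complex.add_re, Complex.mul_re, Complex.mul_im, Complex.add_im, Complex.one_re,
    Complex.one_im, Complex.ofReal_re, Complex.ofReal_im, pow_two, hre, him]
  have hA : 2.69 < p*p - u*u + sr3*p + 1 := by nlinarith
  have hB : 1.35 < p*p - u*u + 1 := by nlinarith
  have hCim : (p*u + u*p + (sr3*u + 0*p) + 0) * (p*u + u*p + 0) ≤ 1.78 := by nlinarith
  have hXY : 2.69*1.35 < (p*p - u*u + (sr3*p - 0*u) + 1) * (p*p - u*u + 1) := by nlinarith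
  nlinarith

lemma cq_ne (t : ℝ) : cq t ≠ 0 := by
  intro h
  have h2 := cq_re_pos t
  rw [h] at h2
  simp at h2

lemma sq_sector (t : ℝ) : |(sq t).im| < (sq t).re := sqrt_sector (cq_re_pos t)
lemma sq_re_pos (t : ℝ) : 0 < (sq t).re := sector_re_pos (sq_sector t)
lemma sq_ne (t : ℝ) : sq t ≠ 0 := by
  intro h
  have h2 := sq_re_pos t
  rw [h] at h2
  simp at h2

lemma K_ne (t : ℝ) : K t ≠ 0 := by
  intro h
  rw [K_eq] at h
  have hre : (13:ℝ)/84 * Real.cos (2*Real.pi*t) = 0 := by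
    have h2 := congrArg Complex.re h
    simpa only [Complex.add_re, Complex.mul_re, Complex.ofReal_re, Complex.ofReal_im,
      Complex.I_re, Complex.I_im, Complex.zero_re, mul_zero, mul_one, zero_mul, sub_zero,
      add_zero, zero_add] using h2
  have him : (85:ℝ)/84 * Real.sin (2*Real.pi*t) = 0 := by
    have h2 := congrArg Complex.im h
    simpa only [Complex.add_im, Complex.mul_im, Complex.ofReal_re, Complex.ofReal_im,
      Complex.I_re, Complex.I_im, Complex.zero_im, mul_zero, mul_one, zero_mul, sub_zero,
      add_zero, zero_add] using h2
  have hs := Real.sin_sq_add_cos_sq (2*Real.pi*t)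
  have h1 : Real.cos (2*Real.pi*t) = 0 := by linarith
  have h2 : Real.sin (2*Real.pi*t) = 0 := by linarith
  rw [h1, h2] at hs
  norm_num at hs

lemma yy_ne (t : ℝ) : yy t ≠ 0 :=
  mul_ne_zero (div_ne_zero (K_ne t) (by norm_num)) (sq_ne t)

lemma sq_sq (t : ℝ) : sq t ^ 2 = cq t := by
  unfold sq
  rw [pow_two, ← Complex.cpow_add _ _ (cq_ne t)]
  norm_num

lemma JK (t : ℝ) : J t ^ 2 = K t ^ 2 + 1 := by
  unfold J K
  linear_combination v_mul_vi t

lemma hw' (t : ℝ) : 2 * w t - (sr3:ℂ) = I * J t := by unfold w; ring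

lemma K_sq (t : ℝ) : K t^2 = -4*(w t)^2 + 4*(sr3:ℂ)*(w t) - 4 := by
  linear_combination (2*w t - (sr3:ℂ) + I*J t) * hw' t + (-1) * JK t
    + (J t)^2 * Complex.I_sq + (-1) * sr3c_sq

lemma c6_pow : c6^6 = -1 := by
  unfold c6
  linear_combination ((1:ℂ)/64 - 1/64*I^2 + 1/64*I^4 - 3/32*(sr3:ℂ)*I + 3/32*(sr3:ℂ)*I^3
      - 15/64*(sr3:ℂ)^2 + 15/64*(sr3:ℂ)^2*I^2 + 5/16*(sr3:ℂ)^3*I + 15/64*(sr3:ℂ)^4) * Complex.I_sq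
    + (-(21:ℂ)/64 - 1/32*(sr3:ℂ)*I - 3/16*(sr3:ℂ)^2 + 3/32*(sr3:ℂ)^3*I + 1/64*(sr3:ℂ)^4) * sr3c_sq

lemma on_curve_pt (t : ℝ) : yy t ^ 2 = xx t ^ 6 - 1 := by
  have h1 : yy t ^ 2 = (K t)^2/4 * cq t := by
    unfold yy
    rw [mul_pow, sq_sq]
    ring
  rw [h1, K_sq]
  unfold xx
  rw [mul_pow, c6_pow]
  unfold cq
  linear_combination ((w t)^2 * ((w t)^2+1)) * sr3c_sq

/-! ### Derivatives and smoothness -/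

def wd (t : ℝ) : ℂ := -Real.pi * K t
def qd (t : ℝ) : ℂ := ((2*w t + (sr3:ℂ)) * ((w t)^2 + 1)
    + ((w t)^2 + (sr3:ℂ)*w t + 1) * (2*w t)) * wd t
def sqd (t : ℝ) : ℂ := (1/2) * (cq t) ^ ((1:ℂ)/2 - 1) * qd t
def Kd (t : ℝ) : ℂ := 2*Real.pi*I * J t
def yyd (t : ℝ) : ℂ := (Kd t/2) * sq t + (K t/2) * sqd t
def xd (t : ℝ) : ℂ := c6 * wd t

lemma hK (t : ℝ) : HasDerivAt K (Kd t) t := by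
  have h := ((hv t).sub (hvi t)).div_const 2
  unfold K Kd
  refine h.congr_deriv (Eq.symm ?_)
  unfold J
  ring

lemma hJ (t : ℝ) : HasDerivAt J (2*Real.pi*I * K t) t := by
  have h := ((hv t).add (hvi t)).div_const 2
  unfold J
  refine h.congr_deriv (Eq.symm ?_)
  unfold K
  ring

lemma hw (t : ℝ) : HasDerivAt w (wd t) t := by
  have h := ((hJ t).const_mul (I/2)).const_add ((sr3:ℂ)/2)
  unfold w wd
  refine h.congr_deriv (Eq.symm ?_)
  linear_combination (-(Real.pi : ℂ) * K t) * Complex.I_sq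

lemma hcq (t : ℝ) : HasDerivAt cq (qd t) t := by
  have h1 : HasDerivAt (fun s => (w s)^2 + (sr3:ℂ) * w s + 1)
      (2 * w t * wd t + (sr3:ℂ) * wd t) t := by
    have h0 := (((hw t).mul (hw t)).add ((hw t).const_mul ((sr3:ℂ)))).add_const 1
    simp only [pow_two]
    refine h0.congr_deriv (Eq.symm ?_)
    ring
  have h2 : HasDerivAt (fun s => (w s)^2 + 1) (2 * w t * wd t) t := by
    have h0 := ((hw t).mul (hw t)).add_const 1
    simp only [pow_two]
    refine h0.congr_deriv (Eq.symm ?_)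
    ring
  have h := h1.mul h2
  unfold cq qd
  refine h.congr_deriv (Eq.symm ?_)
  ring

lemma hsq (t : ℝ) : HasDerivAt sq (sqd t) t := by
  have hslit : cq t ∈ Complex.slitPlane := Complex.mem_slitPlane_iff.mpr (Or.inl (cq_re_pos t))
  have h1 : HasDerivAt (fun z : ℂ => z ^ ((1:ℂ)/2)) ((1/2) * (cq t) ^ ((1:ℂ)/2 - 1)) (cq t) :=
    (Complex.hasStrictDerivAt_cpow_const hslit).hasDerivAt
  have h2 := (h1.hasFDerivAt.restrictScalars ℝ).comp_hasDerivAt t (hcq t).hasFDerivAt.hasDerivAt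
  unfold sq sqd
  refine h2.congr_deriv (Eq.symm ?_)
  try simp [mul_comm]

lemma hyy (t : ℝ) : HasDerivAt yy (yyd t) t := by
  have h := ((hK t).div_const 2).mul (hsq t)
  unfold yy yyd
  refine h.congr_deriv (Eq.symm ?_)
  try ring

lemma hxx (t : ℝ) : HasDerivAt xx (xd t) t := ((hw t).const_mul c6)

lemma w_cont : Continuous w := by
  have h : ContDiff ℝ 1 w := by
    unfold w J
    exact contDiff_const.add (contDiff_const.mul ((v_contDiff.add vi_contDiff).div_const 2))
  exact h.continuous

lemma K_cont : Continuous K := by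
  have h : ContDiff ℝ 1 K := by
    unfold K
    exact (v_contDiff.sub vi_contDiff).div_const 2
  exact h.continuous

lemma J_cont : Continuous J := by
  have h : ContDiff ℝ 1 J := by
    unfold J
    exact (v_contDiff.add vi_contDiff).div_const 2
  exact h.continuous

lemma cq_cont : Continuous cq := by
  unfold cq
  exact (((w_cont.pow 2).add (continuous_const.mul w_cont)).add continuous_const).mul
    ((w_cont.pow 2).add continuous_const)

lemma sq_cont : Continuous sq := by
  unfold sq
  apply Continuous.cpow cq_cont continuous_const
  intro t
  exact Or.inl (cq_re_pos t)

lemma sqd_cont : Continuous sqd := by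
  unfold sqd qd wd
  apply Continuous.mul
  · apply Continuous.mul continuous_const
    apply Continuous.cpow cq_cont continuous_const
    intro t
    exact Or.inl (cq_re_pos t)
  · apply Continuous.mul
    · exact (((continuous_const.mul w_cont).add continuous_const).mul
        ((w_cont.pow 2).add continuous_const)).add
        ((((w_cont.pow 2).add (continuous_const.mul w_cont)).add continuous_const).mul
          (continuous_const.mul w_cont))
    · exact continuous_const.mul K_cont

lemma yyd_cont : Continuous yyd := by
  unfold yyd Kd
  apply Continuous.add
  · exact (Continuous.div_const (continuous_const.mul J_cont) 2).mul sq_cont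
  · exact (K_cont.div_const 2).mul sqd_cont

lemma yy_contDiff : ContDiff ℝ 1 yy := by
  rw [contDiff_one_iff_deriv]
  constructor
  · exact fun t => (hyy t).differentiableAt
  · have h : deriv yy = yyd := funext fun t => (hyy t).deriv
    rw [h]
    exact yyd_cont

lemma xx_contDiff : ContDiff ℝ 1 xx := by
  unfold xx w J
  exact contDiff_const.mul (contDiff_const.add
    (contDiff_const.mul ((v_contDiff.add vi_contDiff).div_const 2)))

/-! ### The loop as a CurveLoop -/

def δ : CurveLoop where
  γ := fun t => (xx t, yy t)
  smooth := xx_contDiff.prodMk yy_contDiff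
  on_curve := fun t => on_curve_pt t
  y_ne_zero := fun t => yy_ne t
  closed := by
    have h1 : xx 0 = xx 1 := by
      unfold xx w J
      rw [v_period, vi_period]
    have h2 : yy 0 = yy 1 := by
      unfold yy K sq cq w J
      rw [v_period, vi_period]
    simp only [Prod.ext_iff]
    exact ⟨h1, h2⟩

end LawAux


namespace LawAux

/-! ### Periods of the basic loop -/

def I0 : ℂ := ∫ t in (0:ℝ)..1, (sq t)⁻¹
def I1 : ℂ := ∫ t in (0:ℝ)..1, w t * (sq t)⁻¹

lemma deriv_x_eq (t : ℝ) : deriv (fun s => (δ.γ s).1) t = xd t := by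
  have h : (fun s => (δ.γ s).1) = xx := rfl
  rw [h]
  exact (hxx t).deriv

lemma period0_eq : period 0 δ = (-2*Real.pi) * c6 * I0 := by
  unfold period I0
  rw [← intervalIntegral.integral_const_mul]
  apply intervalIntegral.integral_congr
  intro t _
  beta_reduce
  rw [deriv_x_eq]
  show xx t ^ 0 / yy t * xd t = _
  rw [pow_zero]
  unfold xd yy wd
  field_simp [K_ne t, sq_ne t]

lemma period1_eq : period 1 δ = (-2*Real.pi) * c6^2 * I1 := by
  unfold period I1
  rw [← intervalIntegral.integral_const_mul]
  apply intervalIntegral.integral_congr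
  intro t _
  beta_reduce
  rw [deriv_x_eq]
  show xx t ^ 1 / yy t * xd t = _
  rw [pow_one]
  unfold xd yy wd xx
  field_simp [K_ne t, sq_ne t]

lemma sq_inv_cont : Continuous fun t => (sq t)⁻¹ := sq_cont.inv₀ sq_ne

lemma I0_re_pos : 0 < I0.re := by
  have hint : IntervalIntegrable (fun t => (sq t)⁻¹) MeasureTheory.volume 0 1 :=
    sq_inv_cont.intervalIntegrable _ _
  have h : I0.re = ∫ t in (0:ℝ)..1, ((sq t)⁻¹).re :=
    (ContinuousLinearMap.intervalIntegral_comp_comm Complex.reCLM hint).symm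
  rw [h]
  apply intervalIntegral.intervalIntegral_pos_of_pos
  · exact (Complex.continuous_re.comp sq_inv_cont).intervalIntegrable _ _
  · exact fun t => sector_re_pos (sector_inv (sq_sector t))
  · norm_num

lemma I1_re_pos : 0 < I1.re := by
  have hint : IntervalIntegrable (fun t => w t * (sq t)⁻¹) MeasureTheory.volume 0 1 :=
    (w_cont.mul sq_inv_cont).intervalIntegrable _ _
  have h : I1.re = ∫ t in (0:ℝ)..1, (w t * (sq t)⁻¹).re :=
    (ContinuousLinearMap.intervalIntegral_comp_comm Complex.reCLM hint).symm
  rw [h]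
  apply intervalIntegral.intervalIntegral_pos_of_pos
  · exact (Complex.continuous_re.comp (w_cont.mul sq_inv_cont)).intervalIntegrable _ _
  · exact fun t => mul_re_pos (w_sector t) (sector_inv (sq_sector t))
  · norm_num

lemma c6_ne : c6 ≠ 0 := by
  intro h
  have h2 := c6_pow
  rw [h] at h2
  norm_num at h2

lemma I0_ne : I0 ≠ 0 := by
  intro h
  have h2 := I0_re_pos
  rw [h] at h2
  simp at h2

lemma I1_ne : I1 ≠ 0 := by
  intro h
  have h2 := I1_re_pos
  rw [h] at h2
  simp at h2

lemma neg_two_pi_ne : (-2*(Real.pi:ℂ)) ≠ 0 := by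
  simp [Real.pi_ne_zero]

lemma A0_ne : period 0 δ ≠ 0 := by
  rw [period0_eq]
  exact mul_ne_zero (mul_ne_zero neg_two_pi_ne c6_ne) I0_ne

lemma A1_ne : period 1 δ ≠ 0 := by
  rw [period1_eq]
  exact mul_ne_zero (mul_ne_zero neg_two_pi_ne (pow_ne_zero 2 c6_ne)) I1_ne

/-! ### Automorphisms acting on loops -/

def zetaC : ℂ := (1 + (sr3:ℂ)*I)/2

lemma zeta_sq : zetaC^2 = zetaC - 1 := by
  unfold zetaC
  linear_combination ((3:ℂ)/4) * Complex.I_sq + ((Complex.I^2)/4) * sr3c_sq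

lemma zeta_pow6 : zetaC^6 = 1 := by
  linear_combination ((zetaC^3 - 1)*(zetaC + 1)) * zeta_sq

def tauL (c : CurveLoop) : CurveLoop where
  γ := fun t => (zetaC * (c.γ t).1, (c.γ t).2)
  smooth := (contDiff_const.mul (contDiff_fst.comp c.smooth)).prodMk (contDiff_snd.comp c.smooth)
  on_curve := fun t => by
    show (c.γ t).2 ^ 2 = (zetaC * (c.γ t).1) ^ 6 - 1
    rw [mul_pow, zeta_pow6, one_mul]
    exact c.on_curve t
  y_ne_zero := fun t => c.y_ne_zero t
  closed := by
    show (zetaC * (c.γ 0).1, (c.γ 0).2) = (zetaC * (c.γ 1).1, (c.γ 1).2)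
    rw [c.closed]

def negL (c : CurveLoop) : CurveLoop where
  γ := fun t => ((c.γ t).1, -(c.γ t).2)
  smooth := (contDiff_fst.comp c.smooth).prodMk (contDiff_snd.comp c.smooth).neg
  on_curve := fun t => by
    show (-(c.γ t).2) ^ 2 = (c.γ t).1 ^ 6 - 1
    rw [show (-(c.γ t).2)^2 = (c.γ t).2^2 from by ring]
    exact c.on_curve t
  y_ne_zero := fun t => neg_ne_zero.mpr (c.y_ne_zero t)
  closed := by
    show ((c.γ 0).1, -(c.γ 0).2) = ((c.γ 1).1, -(c.γ 1).2)
    rw [c.closed]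

lemma diffx (c : CurveLoop) (t : ℝ) : DifferentiableAt ℝ (fun s => (c.γ s).1) t :=
  ((contDiff_fst.comp c.smooth).differentiable one_ne_zero).differentiableAt

lemma period_tau (j : ℕ) (c : CurveLoop) :
    period j (tauL c) = zetaC^(j+1) * period j c := by
  unfold period
  rw [← intervalIntegral.integral_const_mul]
  apply intervalIntegral.integral_congr
  intro t _
  show (zetaC * (c.γ t).1)^j / (c.γ t).2 * deriv (fun s => zetaC * (c.γ s).1) t = _
  rw [deriv_const_mul _ (diffx c t), mul_pow, pow_succ]
  ring

lemma period_neg (j : ℕ) (c : CurveLoop) : period j (negL c) = - period j c := by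
  unfold period
  rw [← intervalIntegral.integral_neg]
  apply intervalIntegral.integral_congr
  intro t _
  show (c.γ t).1^j / (-(c.γ t).2) * deriv (fun s => (c.γ s).1) t = _
  ring

def a1 : CurveLoop := negL (tauL (tauL (tauL (tauL δ))))
def b0 : CurveLoop := tauL δ
def b1 : CurveLoop := tauL (tauL (tauL δ))

lemma period_a1 (j : ℕ) : period j a1 = -(zetaC^(j+1))^4 * period j δ := by
  unfold a1
  rw [period_neg, period_tau, period_tau, period_tau, period_tau]
  ring

lemma period_b0 (j : ℕ) : period j b0 = zetaC^(j+1) * period j δ := period_tau j δ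

lemma period_b1 (j : ℕ) : period j b1 = (zetaC^(j+1))^3 * period j δ := by
  unfold b1
  rw [period_tau, period_tau, period_tau]
  ring

lemma sr3_ne : (sr3:ℂ) ≠ 0 := by
  have h : (0:ℝ) < sr3 := lt_trans (by norm_num) sr3_lb
  exact_mod_cast ne_of_gt h

lemma I_div_sr3 : Complex.I / (sr3:ℂ) = (2*zetaC - 1)/3 := by
  rw [div_eq_div_iff sr3_ne (by norm_num : (3:ℂ) ≠ 0)]
  unfold zetaC
  linear_combination (-Complex.I) * sr3c_sq

lemma e0 (X A : ℂ) (hA : A ≠ 0) : X/(3*A) * A = X/3 := by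
  field_simp

lemma e1 (X z A : ℂ) (hA : A ≠ 0) : X/(3*A) * (z * A) = X*z/3 := by
  field_simp

end LawAux

/-- the genus 2 hyperelliptic curve `y² = x⁶ − 1` has period matrix
`Ω = (i/√3)·[[2, −1], [−1, 2]]` with respect to a suitable canonical homology basis
`(a₁, a₂, b₁, b₂)`: there is a basis `ζ₁, ζ₂` of the holomorphic 1-forms (given by
coefficients `c` with respect to `ω_j = x^{j-1} dx/y`, `j = 1, 2`) normalized so that its
`a`-periods are the identity, whose `b`-periods form the matrix `Ω`. -/
theorem period_matrix_of_lawson_curve :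
    ∃ (a b : Fin 2 → CurveLoop) (c : Fin 2 → Fin 2 → ℂ),
      (∀ i k : Fin 2,
        ∑ j : Fin 2, c i j * period (j : ℕ) (a k) = if i = k then 1 else 0) ∧
      (∀ i k : Fin 2,
        ∑ j : Fin 2, c i j * period (j : ℕ) (b k)
          = Complex.I / (Real.sqrt 3 : ℂ) * (if i = k then 2 else -1)) := by
  classical
  refine ⟨![LawAux.δ, LawAux.a1], ![LawAux.b0, LawAux.b1],
    ![![(1+LawAux.zetaC)/(3*period 0 LawAux.δ), (2-LawAux.zetaC)/(3*period 1 LawAux.δ)],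
      ![(1-2*LawAux.zetaC)/(3*period 0 LawAux.δ), (2*LawAux.zetaC-1)/(3*period 1 LawAux.δ)]],
    ?_, ?_⟩
  · intro i k
    fin_cases i <;> fin_cases k <;>
      simp only [Fin.sum_univ_two, Matrix.cons_val_zero, Matrix.cons_val_one, Matrix.head_cons,
        Fin.isValue, Fin.val_zero, Fin.val_one, if_true, if_false, Fin.mk_zero, Fin.mk_one,
        reduceIte]
    · rw [LawAux.e0 _ _ LawAux.A0_ne, LawAux.e0 _ _ LawAux.A1_ne]
      ring
    · rw [if_neg (by decide), LawAux.period_a1 0, LawAux.period_a1 1,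
        LawAux.e1 _ _ _ LawAux.A0_ne, LawAux.e1 _ _ _ LawAux.A1_ne]
      linear_combination ((-1/3)*LawAux.zetaC^4 + (-2/3)*LawAux.zetaC^5 + (-1/3)*LawAux.zetaC^6
        + (1/3)*LawAux.zetaC^7) * LawAux.zeta_sq
    · rw [if_neg (by decide), LawAux.e0 _ _ LawAux.A0_ne, LawAux.e0 _ _ LawAux.A1_ne]
      ring
    · rw [LawAux.period_a1 0, LawAux.period_a1 1,
        LawAux.e1 _ _ _ LawAux.A0_ne, LawAux.e1 _ _ _ LawAux.A1_ne]
      linear_combination ((-1:ℂ) + (-1)*LawAux.zetaC + LawAux.zetaC^3 + (2/3)*LawAux.zetaC^4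
        + (1/3)*LawAux.zetaC^5 + (-1/3)*LawAux.zetaC^6 + (-2/3)*LawAux.zetaC^7) * LawAux.zeta_sq
  · intro i k
    have h3 : Complex.I / (Real.sqrt 3 : ℂ) = (2*LawAux.zetaC - 1)/3 := LawAux.I_div_sr3
    fin_cases i <;> fin_cases k <;>
      simp only [Fin.sum_univ_two, Matrix.cons_val_zero, Matrix.cons_val_one, Matrix.head_cons,
        Fin.isValue, Fin.val_zero, Fin.val_one, if_true, if_false, Fin.mk_zero, Fin.mk_one,
        reduceIte] <;> rw [h3]
    · rw [LawAux.period_b0 0, LawAux.period_b0 1,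
        LawAux.e1 _ _ _ LawAux.A0_ne, LawAux.e1 _ _ _ LawAux.A1_ne]
      linear_combination ((2:ℂ)/3 + (-1/3)*LawAux.zetaC) * LawAux.zeta_sq
    · rw [if_neg (by decide), LawAux.period_b1 0, LawAux.period_b1 1,
        LawAux.e1 _ _ _ LawAux.A0_ne, LawAux.e1 _ _ _ LawAux.A1_ne]
      linear_combination ((-1:ℂ)/3 + (1/3)*LawAux.zetaC + (2/3)*LawAux.zetaC^2
        + (2/3)*LawAux.zetaC^3 + (1/3)*LawAux.zetaC^4 + (-1/3)*LawAux.zetaC^5) * LawAux.zeta_sq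
    · rw [if_neg (by decide), LawAux.period_b0 0, LawAux.period_b0 1,
        LawAux.e1 _ _ _ LawAux.A0_ne, LawAux.e1 _ _ _ LawAux.A1_ne]
      linear_combination ((-1:ℂ)/3 + (2/3)*LawAux.zetaC) * LawAux.zeta_sq
    · rw [LawAux.period_b1 0, LawAux.period_b1 1,
        LawAux.e1 _ _ _ LawAux.A0_ne, LawAux.e1 _ _ _ LawAux.A1_ne]
      linear_combination ((2:ℂ)/3 + (-2/3)*LawAux.zetaC + (-4/3)*LawAux.zetaC^2
        + (-1/3)*LawAux.zetaC^3 + (1/3)*LawAux.zetaC^4 + (2/3)*LawAux.zetaC^5) * LawAux.zeta_sq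
end
end
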